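/- (Robbins' bounds) For every positive integer n, √(2πn)·(n/e)^n·exp(1/(12n+1)) ≤ n! ≤ √(2πn)·(n/e)^n·exp(1/(12n)). -/

import Mathlib

open Real Filter Stirling Nat
open scoped Topology

/-- Upper bound on the successive log-differences of the Stirling sequence. -/
lemma robbins_diff_le (m : ℕ) :
    Real.log (stirlingSeq (m + 1)) - Real.log (stirlingSeq (m + 2)) ≤
      1 / (12 * ((m : ℝ) + 1)) - 1 / (12 * ((m : ℝ) + 2)) := by
  set q : ℝ := (1 / (2 * ((m : ℝ) + 1) + 1)) ^ 2 with hq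
  have hm0 : (0 : ℝ) ≤ (m : ℝ) := Nat.cast_nonneg m
  have hq0 : 0 ≤ q := sq_nonneg _
  have hq1 : q < 1 := by
    rw [hq, div_pow, one_pow]
    rw [div_lt_one (by positivity)]
    nlinarith
  have hgeo : HasSum (fun k : ℕ => (1 / 3 : ℝ) * q ^ (k + 1)) ((1 / 3) * (q / (1 - q))) := by
    have := (hasSum_geometric_of_lt_one hq0 hq1).mul_left q
    simp_rw [← _root_.pow_succ'] at this
    have := this.mul_left (1 / 3 : ℝ)
    rw [div_eq_mul_inv]; exact this
  have hsum := Stirling.log_stirlingSeq_diff_hasSum m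
  have hle : Real.log (stirlingSeq (m + 1)) - Real.log (stirlingSeq (m + 2)) ≤
      (1 / 3) * (q / (1 - q)) := by
    refine hasSum_le (fun k => ?_) hsum hgeo
    have h1 : (1 : ℝ) / (2 * ((k + 1 : ℕ) : ℝ) + 1) ≤ 1 / 3 := by
      apply div_le_div_of_nonneg_left (by norm_num) (by norm_num)
      push_cast
      have := Nat.cast_nonneg (α := ℝ) k; linarith
    have h2 : (0 : ℝ) ≤ ((1 / (2 * ((m + 1 : ℕ) : ℝ) + 1)) ^ 2) ^ (k + 1) := by positivity
    have h3 : ((1 / (2 * ((m + 1 : ℕ) : ℝ) + 1)) ^ 2) ^ (k + 1) = q ^ (k + 1) := by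
      rw [hq]; push_cast; ring
    calc (1 : ℝ) / (2 * ((k + 1 : ℕ) : ℝ) + 1) * ((1 / (2 * ((m + 1 : ℕ) : ℝ) + 1)) ^ 2) ^ (k + 1)
        ≤ 1 / 3 * ((1 / (2 * ((m + 1 : ℕ) : ℝ) + 1)) ^ 2) ^ (k + 1) :=
          mul_le_mul_of_nonneg_right h1 h2
      _ = 1 / 3 * q ^ (k + 1) := by rw [h3]
  refine hle.trans_eq ?_
  have hd : (2 * ((m : ℝ) + 1) + 1) ^ 2 ≠ 0 := by positivity
  have h1q : 1 - q = (4 * ((m : ℝ) + 1) ^ 2 + 4 * ((m : ℝ) + 1)) / (2 * ((m : ℝ) + 1) + 1) ^ 2 := by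
    rw [hq]; field_simp; ring
  rw [h1q, hq]
  have h4 : (4 * ((m : ℝ) + 1) ^ 2 + 4 * ((m : ℝ) + 1)) ≠ 0 := by positivity
  field_simp
  ring

/-- Lower bound on the successive log-differences of the Stirling sequence. -/
lemma robbins_le_diff (m : ℕ) :
    1 / (12 * ((m : ℝ) + 1) + 1) - 1 / (12 * ((m : ℝ) + 2) + 1) ≤
      Real.log (stirlingSeq (m + 1)) - Real.log (stirlingSeq (m + 2)) := by
  have hm0 : (0 : ℝ) ≤ (m : ℝ) := Nat.cast_nonneg m
  have hsum := Stirling.log_stirlingSeq_diff_hasSum m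
  have h0 := le_hasSum hsum 0 (fun i _ => by positivity)
  refine le_trans ?_ h0
  have hX : (0 : ℝ) < 2 * ((m : ℝ) + 1) + 1 := by positivity
  have key : (1 : ℝ) / (2 * ((0 + 1 : ℕ) : ℝ) + 1) * ((1 / (2 * ((m + 1 : ℕ) : ℝ) + 1)) ^ 2) ^ (0 + 1) =
      1 / (3 * (2 * ((m : ℝ) + 1) + 1) ^ 2) := by
    push_cast
    rw [pow_one]
    field_simp
    norm_num
  rw [key]
  rw [div_sub_div _ _ (by positivity) (by positivity), div_le_div_iff₀ (by positivity) (by positivity)]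
  nlinarith [sq_nonneg ((m : ℝ))]

/-- Robbins bounds for the log of the Stirling sequence. -/
lemma robbins_log_bounds (m : ℕ) :
    Real.log (√π) + 1 / (12 * ((m : ℝ) + 1) + 1) ≤ Real.log (stirlingSeq (m + 1)) ∧
      Real.log (stirlingSeq (m + 1)) ≤ Real.log (√π) + 1 / (12 * ((m : ℝ) + 1)) := by
  have hπ : (0 : ℝ) < √π := Real.sqrt_pos.mpr Real.pi_pos
  -- limit of log (stirlingSeq (m+1))
  have hc : Tendsto (fun m : ℕ => Real.log (stirlingSeq (m + 1))) atTop (𝓝 (Real.log (√π))) := by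
    have h1 : Tendsto (fun m : ℕ => stirlingSeq (m + 1)) atTop (𝓝 (√π)) :=
      Stirling.tendsto_stirlingSeq_sqrt_pi.comp (tendsto_add_atTop_nat 1)
    exact ((Real.continuousAt_log hπ.ne').tendsto).comp h1
  have hden : Tendsto (fun m : ℕ => ((m : ℝ) + 1)) atTop atTop :=
    tendsto_atTop_add_const_right _ 1 tendsto_natCast_atTop_atTop
  have h12 : Tendsto (fun m : ℕ => 1 / (12 * ((m : ℝ) + 1))) atTop (𝓝 0) := by
    have : Tendsto (fun m : ℕ => (12 : ℝ) * ((m : ℝ) + 1)) atTop atTop :=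
      hden.const_mul_atTop (by norm_num)
    simpa only [one_div, Pi.inv_def] using this.inv_tendsto_atTop
  have h13 : Tendsto (fun m : ℕ => 1 / (12 * ((m : ℝ) + 1) + 1)) atTop (𝓝 0) := by
    have : Tendsto (fun m : ℕ => (12 : ℝ) * ((m : ℝ) + 1) + 1) atTop atTop :=
      tendsto_atTop_add_const_right _ 1 (hden.const_mul_atTop (by norm_num))
    simpa only [one_div, Pi.inv_def] using this.inv_tendsto_atTop
  -- monotone sequence F
  have hFmono : Monotone (fun m : ℕ => Real.log (stirlingSeq (m + 1)) - 1 / (12 * ((m : ℝ) + 1))) := by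
    apply monotone_nat_of_le_succ
    intro k
    have := robbins_diff_le k
    push_cast
    ring_nf
    ring_nf at this
    linarith
  have hGanti : Antitone
      (fun m : ℕ => Real.log (stirlingSeq (m + 1)) - 1 / (12 * ((m : ℝ) + 1) + 1)) := by
    apply antitone_nat_of_succ_le
    intro k
    have := robbins_le_diff k
    push_cast
    ring_nf
    ring_nf at this
    linarith
  have hFlim : Tendsto (fun m : ℕ => Real.log (stirlingSeq (m + 1)) - 1 / (12 * ((m : ℝ) + 1)))
      atTop (𝓝 (Real.log (√π))) := by simpa using hc.sub h12
  have hGlim : Tendsto (fun m : ℕ => Real.log (stirlingSeq (m + 1)) - 1 / (12 * ((m : ℝ) + 1) + 1))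
      atTop (𝓝 (Real.log (√π))) := by simpa using hc.sub h13
  constructor
  · have := hGanti.le_of_tendsto hGlim m
    linarith
  · have := hFmono.ge_of_tendsto hFlim m
    linarith

theorem stmt_18 (n : ℕ) (hn : 0 < n) :
    Real.sqrt (2 * Real.pi * n) * ((n : ℝ) / Real.exp 1) ^ n * Real.exp (1 / (12 * n + 1))
        ≤ (n.factorial : ℝ) ∧
      (n.factorial : ℝ) ≤
        Real.sqrt (2 * Real.pi * n) * ((n : ℝ) / Real.exp 1) ^ n * Real.exp (1 / (12 * n)) := by
  obtain ⟨m, rfl⟩ := Nat.exists_eq_succ_of_ne_zero hn.ne'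
  have hπ : (0 : ℝ) < √π := Real.sqrt_pos.mpr Real.pi_pos
  have hb := robbins_log_bounds m
  have hspos : 0 < stirlingSeq (m + 1) := Stirling.stirlingSeq'_pos m
  have hcast : ((m + 1 : ℕ) : ℝ) = (m : ℝ) + 1 := by push_cast; ring
  -- exponentiate the log bounds
  have hlow : √π * Real.exp (1 / (12 * ((m : ℝ) + 1) + 1)) ≤ stirlingSeq (m + 1) := by
    have h := hb.1
    have := Real.exp_le_exp.mpr h
    rwa [Real.exp_add, Real.exp_log hπ, Real.exp_log hspos] at this
  have hhigh : stirlingSeq (m + 1) ≤ √π * Real.exp (1 / (12 * ((m : ℝ) + 1))) := by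
    have h := hb.2
    have := Real.exp_le_exp.mpr h
    rwa [Real.exp_add, Real.exp_log hπ, Real.exp_log hspos] at this
  -- the denominator
  set D : ℝ := √(2 * ((m + 1 : ℕ) : ℝ)) * (((m + 1 : ℕ) : ℝ) / Real.exp 1) ^ (m + 1) with hD
  have hDpos : 0 < D := by
    rw [hD]
    have : (0 : ℝ) < ((m + 1 : ℕ) : ℝ) := by exact_mod_cast Nat.succ_pos m
    positivity
  have hfact : ((m + 1).factorial : ℝ) = stirlingSeq (m + 1) * D := by
    rw [hD, stirlingSeq]
    field_simp
  have hsqrt : √(2 * π * ((m + 1 : ℕ) : ℝ)) =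
      √π * √(2 * ((m + 1 : ℕ) : ℝ)) := by
    rw [← Real.sqrt_mul Real.pi_pos.le]
    ring_nf
  constructor
  · calc √(2 * π * ((m + 1 : ℕ) : ℝ)) * (((m + 1 : ℕ) : ℝ) / Real.exp 1) ^ (m + 1) *
        Real.exp (1 / (12 * ((m + 1 : ℕ) : ℝ) + 1))
        = (√π * Real.exp (1 / (12 * ((m : ℝ) + 1) + 1))) * D := by
          rw [hsqrt, hD, hcast]; ring
      _ ≤ stirlingSeq (m + 1) * D := by
          exact mul_le_mul_of_nonneg_right hlow hDpos.le
      _ = ((m + 1).factorial : ℝ) := hfact.symm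
  · calc ((m + 1).factorial : ℝ) = stirlingSeq (m + 1) * D := hfact
      _ ≤ (√π * Real.exp (1 / (12 * ((m : ℝ) + 1)))) * D :=
          mul_le_mul_of_nonneg_right hhigh hDpos.le
      _ = √(2 * π * ((m + 1 : ℕ) : ℝ)) * (((m + 1 : ℕ) : ℝ) / Real.exp 1) ^ (m + 1) *
            Real.exp (1 / (12 * ((m + 1 : ℕ) : ℝ))) := by
          rw [hsqrt, hD, hcast]; ring
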